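/- arXiv:1212.0705 — 3 statements merged into one kernel-verified Lean document; each statement's English description precedes it below -/
import Mathlib

section
/- There exist constants C > 0 and R₀ ≥ 1 such that for every λ ∈ (0, 1/R₀): |log λ| − C ≤ λ^{−2} inf_{(û,ŵ) ∈ 𝒲_λ} I_λ(û, ŵ) ≤ |log λ| + C, where I_λ(û, ŵ) = ∫₀¹ r ρ^el_λ(r) dr. -/
open MeasureTheory Set Filter

/-- The elastic energy density
`ρ^el_λ(r) = (ŵ² − 1 + û')² + (û/r)² + λ²(ŵ'² + ŵ²/r²)`. -/
noncomputable def rhoL (lam : ℝ) (uh wh uh' wh' : ℝ → ℝ) (r : ℝ) : ℝ :=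
  (wh r ^ 2 - 1 + uh' r) ^ 2 + (uh r / r) ^ 2 + lam ^ 2 * (wh' r ^ 2 + wh r ^ 2 / r ^ 2)

/-- Membership in `𝒲_λ`: `(û, ŵ) ∈ W^{1,2}_loc((0,∞), ℝ²)` (continuous representatives
with pointwise derivatives `uh', wh'`, locally square integrable) such that
`∫₀¹ r ρ^el_λ(r) dr < ∞`. -/
def MemWL (lam : ℝ) (uh wh uh' wh' : ℝ → ℝ) : Prop :=
  (∀ r ∈ Ioi (0 : ℝ), HasDerivAt uh (uh' r) r) ∧
  (∀ r ∈ Ioi (0 : ℝ), HasDerivAt wh (wh' r) r) ∧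
  (∀ a b : ℝ, 0 < a → IntegrableOn (fun r => uh' r ^ 2 + wh' r ^ 2) (Ioo a b)) ∧
  IntegrableOn (fun r => r * rhoL lam uh wh uh' wh' r) (Ioo 0 1)

set_option maxHeartbeats 2000000 in
open intervalIntegral in
lemma upper_aux (lam : ℝ) (hl0 : 0 < lam) (hl1 : lam < 1) :
    ∃ uh wh uh' wh' : ℝ → ℝ, MemWL lam uh wh uh' wh' ∧
      (∫ r in Ioo (0:ℝ) 1, r * rhoL lam uh wh uh' wh' r) ≤ lam ^ 2 * (-Real.log lam + 10) := by
  have hq : ∀ r : ℝ, 0 < r ^ 2 + lam ^ 2 := fun r => by positivity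
  have hqne : ∀ r : ℝ, r ^ 2 + lam ^ 2 ≠ 0 := fun r => ne_of_gt (hq r)
  set w : ℝ → ℝ := fun r => r ^ 2 / (r ^ 2 + lam ^ 2) with hwdef
  set w' : ℝ → ℝ := fun r => 2 * r * lam ^ 2 / (r ^ 2 + lam ^ 2) ^ 2 with hw'def
  have hw : ∀ r : ℝ, HasDerivAt w (w' r) r := by
    intro r
    have h1 : HasDerivAt (fun r : ℝ => r ^ 2) (2 * r) r := by
      simpa using hasDerivAt_pow 2 r
    have h2 : HasDerivAt (fun r : ℝ => r ^ 2 + lam ^ 2) (2 * r) r := h1.add_const _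
    have h3 := h1.div h2 (hqne r)
    have hnum : 2 * r * (r ^ 2 + lam ^ 2) - r ^ 2 * (2 * r) = 2 * r * lam ^ 2 := by ring
    rw [hnum] at h3
    exact h3
  have hw'c : Continuous w' := by
    apply Continuous.div (by continuity) (by continuity)
    intro r; positivity
  have hrho : ∀ r : ℝ, rhoL lam (fun _ => 0) w (fun _ => 0) w' r
      = (w r ^ 2 - 1) ^ 2 + lam ^ 2 * (w' r ^ 2 + w r ^ 2 / r ^ 2) := by
    intro r; simp [rhoL]
  -- the continuous majorant
  set G : ℝ → ℝ := fun r => 4 * lam ^ 4 * r / (r ^ 2 + lam ^ 2) ^ 2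
      + 4 * lam ^ 6 * r / (r ^ 2 + lam ^ 2) ^ 3 + lam ^ 2 * (r / (r ^ 2 + lam ^ 2)) with hGdef
  have hGc : Continuous G := by
    apply Continuous.add
    apply Continuous.add
    · exact Continuous.div (by continuity) (by continuity) (fun r => by positivity)
    · exact Continuous.div (by continuity) (by continuity) (fun r => by positivity)
    · exact Continuous.mul continuous_const
        (Continuous.div continuous_id (by continuity) (fun r => by positivity))
  have hGint : IntegrableOn G (Ioo 0 1) := by
    exact (hGc.continuousOn.integrableOn_Icc).mono_set Ioo_subset_Icc_self
  -- pointwise bound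
  have hptw : ∀ r ∈ Ioo (0:ℝ) 1, r * rhoL lam (fun _ => 0) w (fun _ => 0) w' r ≤ G r := by
    rintro r ⟨hr0, hr1⟩
    have hr2q : r ^ 2 ≤ r ^ 2 + lam ^ 2 := by nlinarith
    have e1 : w r ^ 2 - 1 = -(lam ^ 2 * ((r ^ 2 + lam ^ 2) + r ^ 2)) / (r ^ 2 + lam ^ 2) ^ 2 := by
      rw [hwdef]; field_simp; ring
    have b1 : r * (w r ^ 2 - 1) ^ 2 ≤ 4 * lam ^ 4 * r / (r ^ 2 + lam ^ 2) ^ 2 := by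
      rw [e1]
      have h4 : ((r ^ 2 + lam ^ 2) + r ^ 2) ^ 2 ≤ 4 * (r ^ 2 + lam ^ 2) ^ 2 := by nlinarith
      have : r * (-(lam ^ 2 * ((r ^ 2 + lam ^ 2) + r ^ 2)) / (r ^ 2 + lam ^ 2) ^ 2) ^ 2
          = r * lam ^ 4 * ((r ^ 2 + lam ^ 2) + r ^ 2) ^ 2 / (r ^ 2 + lam ^ 2) ^ 4 := by
        field_simp
      rw [this, div_le_div_iff₀ (by positivity) (by positivity)]
      have key := mul_le_mul_of_nonneg_left h4
        (show (0:ℝ) ≤ r * lam ^ 4 * (r ^ 2 + lam ^ 2) ^ 2 by positivity)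
      calc r * lam ^ 4 * (r ^ 2 + lam ^ 2 + r ^ 2) ^ 2 * (r ^ 2 + lam ^ 2) ^ 2
          = r * lam ^ 4 * (r ^ 2 + lam ^ 2) ^ 2 * ((r ^ 2 + lam ^ 2 + r ^ 2) ^ 2) := by ring
        _ ≤ r * lam ^ 4 * (r ^ 2 + lam ^ 2) ^ 2 * (4 * (r ^ 2 + lam ^ 2) ^ 2) := key
        _ = 4 * lam ^ 4 * r * (r ^ 2 + lam ^ 2) ^ 4 := by ring
    have b2 : r * (lam ^ 2 * w' r ^ 2) ≤ 4 * lam ^ 6 * r / (r ^ 2 + lam ^ 2) ^ 3 := by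
      have : r * (lam ^ 2 * w' r ^ 2) = 4 * lam ^ 6 * (r * r ^ 2) / (r ^ 2 + lam ^ 2) ^ 4 := by
        rw [hw'def]; field_simp; ring
      rw [this, div_le_div_iff₀ (by positivity) (by positivity)]
      have key := mul_le_mul_of_nonneg_left hr2q
        (show (0:ℝ) ≤ 4 * lam ^ 6 * r * (r ^ 2 + lam ^ 2) ^ 3 by positivity)
      calc 4 * lam ^ 6 * (r * r ^ 2) * (r ^ 2 + lam ^ 2) ^ 3
          = 4 * lam ^ 6 * r * (r ^ 2 + lam ^ 2) ^ 3 * (r ^ 2) := by ring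
        _ ≤ 4 * lam ^ 6 * r * (r ^ 2 + lam ^ 2) ^ 3 * (r ^ 2 + lam ^ 2) := key
        _ = 4 * lam ^ 6 * r * (r ^ 2 + lam ^ 2) ^ 4 := by ring
    have b3 : r * (lam ^ 2 * (w r ^ 2 / r ^ 2)) ≤ lam ^ 2 * (r / (r ^ 2 + lam ^ 2)) := by
      have : r * (lam ^ 2 * (w r ^ 2 / r ^ 2)) = lam ^ 2 * (r * r ^ 2) / (r ^ 2 + lam ^ 2) ^ 2 := by
        rw [hwdef]; field_simp
      have e3 : lam ^ 2 * (r / (r ^ 2 + lam ^ 2)) = lam ^ 2 * r / (r ^ 2 + lam ^ 2) := by ring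
      rw [this, e3, div_le_div_iff₀ (by positivity) (by positivity)]
      have key := mul_le_mul_of_nonneg_left hr2q
        (show (0:ℝ) ≤ lam ^ 2 * r * (r ^ 2 + lam ^ 2) by positivity)
      calc lam ^ 2 * (r * r ^ 2) * (r ^ 2 + lam ^ 2)
          = lam ^ 2 * r * (r ^ 2 + lam ^ 2) * (r ^ 2) := by ring
        _ ≤ lam ^ 2 * r * (r ^ 2 + lam ^ 2) * (r ^ 2 + lam ^ 2) := key
        _ = lam ^ 2 * r * (r ^ 2 + lam ^ 2) ^ 2 := by ring
    calc r * rhoL lam (fun _ => 0) w (fun _ => 0) w' r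
        = r * (w r ^ 2 - 1) ^ 2 + r * (lam ^ 2 * w' r ^ 2) + r * (lam ^ 2 * (w r ^ 2 / r ^ 2)) := by
          rw [hrho]; ring
      _ ≤ G r := by rw [hGdef]; dsimp only; linarith
  have hnn : ∀ r ∈ Ioo (0:ℝ) 1, 0 ≤ r * rhoL lam (fun _ => 0) w (fun _ => 0) w' r := by
    rintro r ⟨hr0, _⟩
    have : 0 ≤ rhoL lam (fun _ => 0) w (fun _ => 0) w' r := by
      rw [rhoL]; positivity
    positivity
  have hwc : Continuous w := by
    rw [hwdef]
    exact (continuous_pow 2).div ((continuous_pow 2).add continuous_const) hqne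
  have hrhoCO : ContinuousOn (fun r : ℝ => rhoL lam (fun _ => 0) w (fun _ => 0) w' r) (Ioo 0 1) := by
    have c1 : Continuous (fun r : ℝ => (w r ^ 2 - 1) ^ 2) :=
      ((hwc.pow 2).sub continuous_const).pow 2
    have c2 : ContinuousOn (fun r : ℝ => w r ^ 2 / r ^ 2) (Ioo (0:ℝ) 1) :=
      ContinuousOn.div (hwc.pow 2).continuousOn (continuous_pow 2).continuousOn
        (fun x hx => pow_ne_zero _ (ne_of_gt hx.1))
    have c3 : ContinuousOn (fun r : ℝ => lam ^ 2 * (w' r ^ 2 + w r ^ 2 / r ^ 2)) (Ioo (0:ℝ) 1) :=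
      ContinuousOn.mul continuousOn_const (((hw'c.pow 2).continuousOn).add c2)
    have := (c1.continuousOn.add c3).congr (fun r _ => hrho r)
    exact this
  have hmeas : AEStronglyMeasurable (fun r => r * rhoL lam (fun _ => 0) w (fun _ => 0) w' r)
      (volume.restrict (Ioo (0:ℝ) 1)) :=
    (continuousOn_id.mul hrhoCO).aestronglyMeasurable measurableSet_Ioo
  have hint : IntegrableOn (fun r => r * rhoL lam (fun _ => 0) w (fun _ => 0) w' r) (Ioo 0 1) := by
    apply Integrable.mono' hGint hmeas
    filter_upwards [ae_restrict_mem measurableSet_Ioo] with r hr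
    rw [Real.norm_eq_abs, abs_of_nonneg (hnn r hr)]
    exact hptw r hr
  refine ⟨fun _ => 0, w, fun _ => 0, w', ⟨?_, ?_, ?_, hint⟩, ?_⟩
  · intro r _; exact hasDerivAt_const r 0
  · intro r _; exact hw r
  · intro a b _
    have : Continuous fun r : ℝ => (0:ℝ) ^ 2 + w' r ^ 2 :=
      continuous_const.add (hw'c.pow 2)
    exact (this.continuousOn.integrableOn_Icc).mono_set Ioo_subset_Icc_self
  -- the integral bound
  have hEG : (∫ r in Ioo (0:ℝ) 1, r * rhoL lam (fun _ => 0) w (fun _ => 0) w' r)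
      ≤ ∫ r in Ioo (0:ℝ) 1, G r :=
    setIntegral_mono_on hint hGint measurableSet_Ioo hptw
  -- FTC for G
  set H : ℝ → ℝ := fun r => -(2 * lam ^ 4) / (r ^ 2 + lam ^ 2) - lam ^ 6 / (r ^ 2 + lam ^ 2) ^ 2
      + lam ^ 2 / 2 * Real.log (r ^ 2 + lam ^ 2) with hHdef
  have hH : ∀ r : ℝ, HasDerivAt H (G r) r := by
    intro r
    have h1 : HasDerivAt (fun r : ℝ => r ^ 2) (2 * r) r := by simpa using hasDerivAt_pow 2 r
    have h2 : HasDerivAt (fun r : ℝ => r ^ 2 + lam ^ 2) (2 * r) r := h1.add_const _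
    have h3 := (hasDerivAt_const r (-(2 * lam ^ 4))).div h2 (hqne r)
    have h4 : HasDerivAt (fun r : ℝ => (r ^ 2 + lam ^ 2) ^ 2) (2 * (r ^ 2 + lam ^ 2) * (2 * r)) r := by
      have := h2.pow 2
      refine this.congr_deriv ?_; ring
    have h5 := (hasDerivAt_const r (lam ^ 6)).div h4 (pow_ne_zero 2 (hqne r))
    have h6 : HasDerivAt (fun r : ℝ => Real.log (r ^ 2 + lam ^ 2)) ((r ^ 2 + lam ^ 2)⁻¹ * (2 * r)) r :=
      ((Real.hasDerivAt_log (hqne r)).comp r h2 :)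
    have := (h3.sub h5).add ((h6.const_mul (lam ^ 2 / 2)))
    refine this.congr_deriv ?_
    rw [hGdef]
    field_simp
    ring
  have hGii : IntervalIntegrable G volume 0 1 := hGc.intervalIntegrable 0 1
  have hGval : (∫ r in Ioo (0:ℝ) 1, G r) = H 1 - H 0 := by
    rw [← integral_Ioc_eq_integral_Ioo, ← intervalIntegral.integral_of_le (by norm_num : (0:ℝ) ≤ 1)]
    exact integral_eq_sub_of_hasDerivAt (fun x _ => hH x) hGii
  have hlne : lam ≠ 0 := ne_of_gt hl0
  have hH0 : H 0 = -2 * lam ^ 2 - lam ^ 2 + lam ^ 2 * Real.log lam := by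
    have h00 : H 0 = -(2 * lam ^ 4) / ((0:ℝ) ^ 2 + lam ^ 2) - lam ^ 6 / ((0:ℝ) ^ 2 + lam ^ 2) ^ 2
        + lam ^ 2 / 2 * Real.log ((0:ℝ) ^ 2 + lam ^ 2) := by rw [hHdef]
    have hz : (0:ℝ) ^ 2 + lam ^ 2 = lam ^ 2 := by ring
    rw [h00, hz, Real.log_pow]
    push_cast
    field_simp
  have hH1 : H 1 = -(2 * lam ^ 4) / ((1:ℝ) ^ 2 + lam ^ 2) - lam ^ 6 / ((1:ℝ) ^ 2 + lam ^ 2) ^ 2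
      + lam ^ 2 / 2 * Real.log ((1:ℝ) ^ 2 + lam ^ 2) := by rw [hHdef]
  have hfinal : H 1 - H 0 ≤ lam ^ 2 * (-Real.log lam + 10) := by
    have h1q : (0:ℝ) < 1 ^ 2 + lam ^ 2 := hq 1
    have hlog1 : Real.log ((1:ℝ) ^ 2 + lam ^ 2) ≤ lam ^ 2 := by
      have := Real.log_le_sub_one_of_pos h1q
      nlinarith
    have hlog1' : 0 ≤ Real.log ((1:ℝ) ^ 2 + lam ^ 2) := by
      apply Real.log_nonneg; nlinarith
    have e1 : 0 ≤ 2 * lam ^ 4 / ((1:ℝ) ^ 2 + lam ^ 2) := by positivity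
    have e2 : 0 ≤ lam ^ 6 / ((1:ℝ) ^ 2 + lam ^ 2) ^ 2 := by positivity
    have e3 : -(2 * lam ^ 4) / ((1:ℝ) ^ 2 + lam ^ 2) = -(2 * lam ^ 4 / ((1:ℝ) ^ 2 + lam ^ 2)) := by
      ring
    have hm : lam ^ 2 / 2 * Real.log ((1:ℝ) ^ 2 + lam ^ 2) ≤ lam ^ 2 / 2 * lam ^ 2 :=
      mul_le_mul_of_nonneg_left hlog1 (by positivity)
    have hsq : lam ^ 2 ≤ 1 := by nlinarith [hl0.le, hl1.le]
    have hll : lam ^ 2 * lam ^ 2 ≤ 1 := by nlinarith [hsq, sq_nonneg lam]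
    rw [hH1, hH0, e3]
    nlinarith [hm, hll, e1, e2]
  exact le_trans hEG (le_trans (le_of_eq hGval) hfinal)

set_option maxHeartbeats 2000000 in
open intervalIntegral in
lemma lower_aux (lam : ℝ) (hl0 : 0 < lam) (hl1 : lam < 1)
    (u w u' w' : ℝ → ℝ) (h : MemWL lam u w u' w') :
    lam ^ 2 * (-Real.log lam - 10) ≤ ∫ r in Ioo (0:ℝ) 1, r * rhoL lam u w u' w' r := by
  obtain ⟨hu, hw, hloc, hint⟩ := h
  have hq : ∀ r : ℝ, 0 < r ^ 2 + lam ^ 2 := fun r => by positivity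
  have hqne : ∀ r : ℝ, r ^ 2 + lam ^ 2 ≠ 0 := fun r => ne_of_gt (hq r)
  have hlne : lam ≠ 0 := ne_of_gt hl0
  have hloglam : Real.log lam ≤ 0 := Real.log_nonpos hl0.le hl1.le
  -- the multiplier φ and its derivative
  set φ : ℝ → ℝ := fun r => -(lam ^ 2 * ((1 - r ^ 2) * r / (r ^ 2 + lam ^ 2))) with hφdef
  set φd : ℝ → ℝ := fun r => -(lam ^ 2 * (((1 - 3 * r ^ 2) * (r ^ 2 + lam ^ 2)
      - (1 - r ^ 2) * r * (2 * r)) / (r ^ 2 + lam ^ 2) ^ 2)) with hφddef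
  have hsq2 : ∀ r : ℝ, HasDerivAt (fun r : ℝ => r ^ 2 + lam ^ 2) (2 * r) r := by
    intro r
    have h1 : HasDerivAt (fun r : ℝ => r ^ 2) (2 * r) r := by simpa using hasDerivAt_pow 2 r
    exact h1.add_const _
  have hφ : ∀ r : ℝ, HasDerivAt φ (φd r) r := by
    intro r
    have h1 : HasDerivAt (fun r : ℝ => r ^ 2) (2 * r) r := by simpa using hasDerivAt_pow 2 r
    have hn : HasDerivAt (fun r : ℝ => (1 - r ^ 2) * r) (1 - 3 * r ^ 2) r := by
      have := ((hasDerivAt_const r (1:ℝ)).sub h1).mul (hasDerivAt_id r)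
      refine this.congr_deriv ?_
      simp only [id_eq, Pi.sub_apply]
      ring
    exact ((hn.div (hsq2 r) (hqne r)).const_mul (lam ^ 2)).neg
  have hφc : Continuous φ := by
    rw [hφdef]
    have : Continuous fun r : ℝ => (1 - r ^ 2) * r := by continuity
    exact (continuous_const.mul (this.div ((continuous_pow 2).add continuous_const) hqne)).neg
  have hφdc : Continuous φd := by
    rw [hφddef]
    have hnum : Continuous fun r : ℝ => (1 - 3 * r ^ 2) * (r ^ 2 + lam ^ 2)
        - (1 - r ^ 2) * r * (2 * r) := by continuity
    exact (continuous_const.mul (hnum.div (((continuous_pow 2).add continuous_const).pow 2)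
      (fun r => pow_ne_zero 2 (hqne r)))).neg
  -- |φ r| ≤ r on [0,1]
  have hφle : ∀ r ∈ Icc (0:ℝ) 1, |φ r| ≤ r := by
    rintro r ⟨hr0, hr1⟩
    have hin : 0 ≤ lam ^ 2 * ((1 - r ^ 2) * r / (r ^ 2 + lam ^ 2)) := by
      apply mul_nonneg (sq_nonneg lam)
      apply div_nonneg _ (le_of_lt (hq r))
      apply mul_nonneg _ hr0
      nlinarith
    have : |φ r| = lam ^ 2 * ((1 - r ^ 2) * r / (r ^ 2 + lam ^ 2)) := by
      rw [hφdef]; rw [abs_neg, abs_of_nonneg hin]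
    rw [this]
    rw [mul_div_assoc'] at *
    rw [div_le_iff₀ (hq r)]
    nlinarith [sq_nonneg r, sq_nonneg lam, mul_nonneg hr0 (sq_nonneg lam)]
  -- nonnegativity of the energy density
  have hnn : ∀ r ∈ Ioo (0:ℝ) 1, 0 ≤ r * rhoL lam u w u' w' r := by
    rintro r ⟨hr0, _⟩
    have : 0 ≤ rhoL lam u w u' w' r := by rw [rhoL]; positivity
    positivity
  have hnnae : 0 ≤ᶠ[ae (volume.restrict (Ioo (0:ℝ) 1))] fun r => r * rhoL lam u w u' w' r := by
    filter_upwards [ae_restrict_mem measurableSet_Ioo] with r hr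
    exact hnn r hr
  -- continuity of u on (0,∞)
  have hucont : ContinuousOn u (Ioi (0:ℝ)) :=
    fun r hr => (hu r hr).continuousAt.continuousWithinAt
  -- u' is a.e. (strongly) measurable on subintervals of (0,∞)
  have hu'meas : ∀ s t : ℝ, 0 < s → AEStronglyMeasurable u' (volume.restrict (Ioc s t)) := by
    intro s t hs
    apply ((measurable_deriv u).aestronglyMeasurable).congr
    filter_upwards [ae_restrict_mem measurableSet_Ioc] with r hr
    exact ((hu r (lt_trans hs hr.1)).deriv)
  -- integrability of u'²/w'² consequences
  have hu'int : ∀ s : ℝ, 0 < s → IntegrableOn u' (Ioc s 1) := by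
    intro s hs
    have hbase : IntegrableOn (fun r => (1 + (u' r ^ 2 + w' r ^ 2)) / 2) (Ioc s 1) := by
      apply Integrable.div_const
      apply Integrable.add
      · exact integrableOn_const measure_Ioc_lt_top.ne
      · exact (hloc s 2 hs).mono_set (fun x hx => ⟨hx.1, lt_of_le_of_lt hx.2 one_lt_two⟩)
    apply Integrable.mono' hbase (hu'meas s 1 hs)
    filter_upwards with r
    rw [Real.norm_eq_abs]
    nlinarith [sq_nonneg (|u' r| - 1), sq_abs (u' r), abs_nonneg (u' r), sq_nonneg (w' r)]
  -- integrability of u²/r on (0,1)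
  have hBint : IntegrableOn (fun r => u r ^ 2 / r) (Ioo 0 1) := by
    have hBmeas : AEStronglyMeasurable (fun r => u r ^ 2 / r) (volume.restrict (Ioo (0:ℝ) 1)) := by
      apply ContinuousOn.aestronglyMeasurable _ measurableSet_Ioo
      apply ContinuousOn.div
      · exact ((hucont.mono (fun x hx => hx.1)).pow 2)
      · exact continuousOn_id
      · exact fun x hx => ne_of_gt hx.1
    apply Integrable.mono' hint hBmeas
    filter_upwards [ae_restrict_mem measurableSet_Ioo] with r hr
    rcases hr with ⟨hr0, hr1⟩
    have hrne : r ≠ 0 := ne_of_gt hr0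
    have e : u r ^ 2 / r = r * (u r / r) ^ 2 := by field_simp
    rw [Real.norm_eq_abs, abs_of_nonneg (by positivity : (0:ℝ) ≤ u r ^ 2 / r), e, rhoL]
    have h1 : 0 ≤ r * (w r ^ 2 - 1 + u' r) ^ 2 := by positivity
    have h2 : 0 ≤ r * (lam ^ 2 * (w' r ^ 2 + w r ^ 2 / r ^ 2)) := by positivity
    nlinarith
  -- the pigeonhole: arbitrarily small s with |u s| ≤ 1
  have hpig : ∀ δ : ℝ, 0 < δ → δ ≤ 1 → ∃ s : ℝ, 0 < s ∧ s < δ ∧ |u s| ≤ 1 := by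
    intro δ hδ0 hδ1
    by_contra hcon
    push_neg at hcon
    set M := ∫ r in Ioo (0:ℝ) 1, u r ^ 2 / r with hMdef
    set ε := min (δ / 2) (Real.exp (Real.log δ - M - 1)) with hεdef
    have hε0 : 0 < ε := lt_min (by linarith) (Real.exp_pos _)
    have hεδ : ε < δ := lt_of_le_of_lt (min_le_left _ _) (by linarith)
    have hlogε : Real.log ε ≤ Real.log δ - M - 1 := by
      rw [Real.log_le_iff_le_exp hε0]
      exact min_le_right _ _
    have hII : IntegrableOn (fun r : ℝ => 1 / r) (Ioo ε δ) := by
      apply (ContinuousOn.integrableOn_Icc _).mono_set Ioo_subset_Icc_self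
      apply ContinuousOn.div continuousOn_const continuousOn_id
      intro x hx
      exact ne_of_gt (lt_of_lt_of_le hε0 hx.1)
    have hsub : Ioo ε δ ⊆ Ioo (0:ℝ) 1 := fun x hx =>
      ⟨lt_trans hε0 hx.1, lt_of_lt_of_le hx.2 hδ1⟩
    have hI1 : (∫ r in Ioo ε δ, 1 / r) ≤ ∫ r in Ioo ε δ, u r ^ 2 / r := by
      apply setIntegral_mono_on hII (hBint.mono_set hsub) measurableSet_Ioo
      intro r hr
      have hr0 : 0 < r := lt_trans hε0 hr.1
      have := hcon r hr0 hr.2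
      have h1 : 1 ≤ u r ^ 2 := by nlinarith [sq_abs (u r), abs_nonneg (u r)]
      exact (div_le_div_iff_of_pos_right hr0).mpr h1
    have hI2 : (∫ r in Ioo ε δ, u r ^ 2 / r) ≤ M := by
      apply setIntegral_mono_set hBint _ (HasSubset.Subset.eventuallyLE hsub)
      filter_upwards [ae_restrict_mem measurableSet_Ioo] with r hr
      exact div_nonneg (sq_nonneg _) (le_of_lt hr.1)
    have hlogval : (∫ r in Ioo ε δ, 1 / r) = Real.log δ - Real.log ε := by
      rw [← integral_Ioc_eq_integral_Ioo, ← intervalIntegral.integral_of_le hεδ.le]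
      rw [integral_one_div]
      · rw [Real.log_div (ne_of_gt (lt_trans hε0 hεδ)) (ne_of_gt hε0)]
      · intro hmem
        rw [Set.uIcc_of_le hεδ.le] at hmem
        exact absurd hmem.1 (not_le.2 hε0)
    rw [hlogval] at hI1
    linarith
  -- the main estimate for fixed s
  have key : ∀ s : ℝ, 0 < s → s < 1 → |u s| ≤ 1 →
      lam ^ 2 * (-Real.log lam - 9) - 2 * s ≤ ∫ r in Ioo (0:ℝ) 1, r * rhoL lam u w u' w' r := by
    intro s hs0 hs1 hus
    have hsub01 : Ioo s 1 ⊆ Ioo (0:ℝ) 1 := fun x hx => ⟨lt_trans hs0 hx.1, hx.2⟩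
    have hIccpos : ∀ r ∈ Icc s 1, 0 < r := fun r hr => lt_of_lt_of_le hs0 hr.1
    have huIcc : ContinuousOn u (Icc s 1) := hucont.mono (fun x hx => hIccpos x hx)
    have hiiOf : ∀ f : ℝ → ℝ, ContinuousOn f (Icc s 1) → IntervalIntegrable f volume s 1 := by
      intro f hf
      apply ContinuousOn.intervalIntegrable
      rwa [uIcc_of_le hs1.le]
    set h2 : ℝ → ℝ := fun r => -φ r - φ r ^ 2 / (4 * r) + u r ^ 2 / r with hh2def
    set g : ℝ → ℝ := fun r => φ r * u' r + h2 r with hgdef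
    -- continuity facts on [s,1]
    have cφsq : ContinuousOn (fun x : ℝ => φ x ^ 2 / (4 * x)) (Icc s 1) :=
      ContinuousOn.div (hφc.pow 2).continuousOn (by fun_prop)
        (fun x hx => by have := hIccpos x hx; positivity)
    have cu2r : ContinuousOn (fun x : ℝ => u x ^ 2 / x) (Icc s 1) :=
      ContinuousOn.div (huIcc.pow 2) continuousOn_id (fun x hx => ne_of_gt (hIccpos x hx))
    have hh2cont : ContinuousOn h2 (Icc s 1) := by
      apply ContinuousOn.add
      · exact ContinuousOn.sub hφc.neg.continuousOn cφsq
      · exact cu2r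
    have cφdu : ContinuousOn (fun x : ℝ => φd x * u x) (Icc s 1) :=
      hφdc.continuousOn.mul huIcc
    have cAM : ContinuousOn (fun x : ℝ => u x ^ 2 / x + x * φd x ^ 2 / 4) (Icc s 1) := by
      apply ContinuousOn.add cu2r
      exact (continuousOn_id.mul (hφdc.pow 2).continuousOn).div_const 4
    have cIA : ContinuousOn (fun x : ℝ => u x ^ 2 / x - φ x ^ 2 / (4 * x)) (Icc s 1) :=
      cu2r.sub cφsq
    have cIQ : ContinuousOn (fun x : ℝ => φ x ^ 2 / (4 * x) + x * φd x ^ 2 / 4) (Icc s 1) := by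
      apply ContinuousOn.add cφsq
      exact (continuousOn_id.mul (hφdc.pow 2).continuousOn).div_const 4
    -- integrability of φ * u'
    have hφu'Ioc : IntegrableOn (fun r => φ r * u' r) (Ioc s 1) := by
      have hbase : IntegrableOn (fun r => (1 + (u' r ^ 2 + w' r ^ 2)) / 2) (Ioc s 1) := by
        apply Integrable.div_const
        apply Integrable.add
        · exact integrableOn_const measure_Ioc_lt_top.ne
        · exact (hloc s 2 hs0).mono_set (fun x hx => ⟨hx.1, lt_of_le_of_lt hx.2 one_lt_two⟩)
      apply Integrable.mono' hbase ((hφc.aestronglyMeasurable.restrict).mul (hu'meas s 1 hs0))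
      filter_upwards [ae_restrict_mem measurableSet_Ioc] with r hr
      have hr01 : r ∈ Icc (0:ℝ) 1 := ⟨le_of_lt (lt_trans hs0 hr.1), hr.2⟩
      have h1 : |φ r| ≤ 1 := le_trans (hφle r hr01) hr.2
      simp only [Pi.mul_apply, Real.norm_eq_abs, abs_mul]
      have h2 : |φ r| * |u' r| ≤ 1 * |u' r| :=
        mul_le_mul_of_nonneg_right h1 (abs_nonneg _)
      rw [one_mul] at h2
      refine le_trans h2 ?_
      nlinarith [sq_nonneg (|u' r| - 1), sq_abs (u' r), abs_nonneg (u' r), sq_nonneg (w' r)]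
    have hφu'ii : IntervalIntegrable (fun r => φ r * u' r) volume s 1 :=
      (intervalIntegrable_iff_integrableOn_Ioc_of_le hs1.le).2 hφu'Ioc
    have hu'ii : IntervalIntegrable u' volume s 1 :=
      (intervalIntegrable_iff_integrableOn_Ioc_of_le hs1.le).2 (hu'int s hs0)
    have hh2ii : IntervalIntegrable h2 volume s 1 := hiiOf _ hh2cont
    have hgIoo : IntegrableOn g (Ioo s 1) := by
      apply IntegrableOn.mono_set _ Ioo_subset_Ioc_self
      apply Integrable.add hφu'Ioc
      exact (hh2cont.integrableOn_Icc).mono_set Ioc_subset_Icc_self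
    -- pointwise master inequality
    have hmaster : ∀ r ∈ Ioo s 1, g r ≤ r * rhoL lam u w u' w' r := by
      rintro r ⟨hrs, hr1⟩
      have hr0 : 0 < r := lt_trans hs0 hrs
      have hrne : r ≠ 0 := ne_of_gt hr0
      have hpos : 0 ≤ φ r + lam ^ 2 / r := by
        have e : φ r + lam ^ 2 / r
            = lam ^ 2 * (lam ^ 2 + r ^ 4) / (r * (r ^ 2 + lam ^ 2)) := by
          rw [hφdef]; field_simp; ring
        rw [e]; positivity
      have hid : r * rhoL lam u w u' w' r - g r
          = (2 * r * (w r ^ 2 - 1 + u' r) - φ r) ^ 2 / (4 * r)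
            + lam ^ 2 * r * w' r ^ 2 + w r ^ 2 * (φ r + lam ^ 2 / r) := by
        rw [rhoL, hgdef, hh2def, hφdef]
        field_simp
        ring
      have t1 : 0 ≤ (2 * r * (w r ^ 2 - 1 + u' r) - φ r) ^ 2 / (4 * r) := by positivity
      have t2 : 0 ≤ lam ^ 2 * r * w' r ^ 2 := by positivity
      have t3 : 0 ≤ w r ^ 2 * (φ r + lam ^ 2 / r) := mul_nonneg (sq_nonneg _) hpos
      have hfin0 : 0 ≤ r * rhoL lam u w u' w' r - g r := by
        rw [hid]; exact add_nonneg (add_nonneg t1 t2) t3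
      exact sub_nonneg.mp hfin0
    -- integration by parts
    have hφ1 : φ 1 = 0 := by rw [hφdef]; norm_num
    have huIcc' : ∀ x ∈ uIcc s 1, HasDerivAt u (u' x) x := by
      rw [uIcc_of_le hs1.le]; intro x hx; exact hu x (hIccpos x hx)
    have hibp := integral_mul_deriv_eq_deriv_mul (fun x _ => hφ x) huIcc'
      (hφdc.intervalIntegrable s 1) hu'ii
    -- AM-GM for the ∫ φd u term
    have hAM : (∫ x in s..1, φd x * u x) ≤ ∫ x in s..1, (u x ^ 2 / x + x * φd x ^ 2 / 4) := by
      apply intervalIntegral.integral_mono_on hs1.le (hiiOf _ cφdu) (hiiOf _ cAM)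
      intro x hx
      have hx0 := hIccpos x hx
      have e : u x ^ 2 / x + x * φd x ^ 2 / 4 - φd x * u x
          = (2 * u x - x * φd x) ^ 2 / (4 * x) := by
        field_simp; ring
      have : 0 ≤ (2 * u x - x * φd x) ^ 2 / (4 * x) := by positivity
      linarith
    -- FTC bound for ∫ (-φ)
    set F : ℝ → ℝ := fun r => lam ^ 2 * ((1 + lam ^ 2) / 2 * Real.log (r ^ 2 + lam ^ 2) - r ^ 2 / 2)
      with hFdef
    have hF : ∀ r : ℝ, HasDerivAt F (-φ r) r := by
      intro r
      have hlog : HasDerivAt (fun r : ℝ => Real.log (r ^ 2 + lam ^ 2))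
          ((r ^ 2 + lam ^ 2)⁻¹ * (2 * r)) r :=
        ((Real.hasDerivAt_log (hqne r)).comp r (hsq2 r) :)
      have hp : HasDerivAt (fun r : ℝ => r ^ 2 / 2) (2 * r / 2) r :=
        HasDerivAt.div_const (by simpa using hasDerivAt_pow 2 r) 2
      have := ((hlog.const_mul ((1 + lam ^ 2) / 2)).sub hp).const_mul (lam ^ 2)
      refine this.congr_deriv ?_
      rw [hφdef]
      field_simp
      ring
    have hE1a : ∫ x in (0:ℝ)..1, (-φ x) = F 1 - F 0 :=
      integral_eq_sub_of_hasDerivAt (fun x _ => hF x) (hφc.neg.intervalIntegrable 0 1)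
    have hsplitφ : (∫ x in (0:ℝ)..s, (-φ x)) + ∫ x in s..1, (-φ x) = ∫ x in (0:ℝ)..1, (-φ x) :=
      integral_add_adjacent_intervals (hφc.neg.intervalIntegrable 0 s)
        (hφc.neg.intervalIntegrable s 1)
    have hE1b : (∫ x in (0:ℝ)..s, (-φ x)) ≤ s ^ 2 / 2 := by
      have hid2 : (∫ x in (0:ℝ)..s, x) = s ^ 2 / 2 := by
        rw [integral_id]; ring
      rw [← hid2]
      apply intervalIntegral.integral_mono_on hs0.le (hφc.neg.intervalIntegrable 0 s)
        intervalIntegrable_id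
      intro x hx
      have hx01 : x ∈ Icc (0:ℝ) 1 := ⟨hx.1, le_trans hx.2 hs1.le⟩
      have h1 := hφle x hx01
      have h2 := neg_abs_le (φ x)
      rw [abs_le] at h1
      show -φ x ≤ x
      linarith [h1.1]
    have hF0 : F 0 = lam ^ 2 * ((1 + lam ^ 2) * Real.log lam) := by
      have h00 : F 0 = lam ^ 2 * ((1 + lam ^ 2) / 2 * Real.log ((0:ℝ) ^ 2 + lam ^ 2)
          - (0:ℝ) ^ 2 / 2) := by rw [hFdef]
      have hz : (0:ℝ) ^ 2 + lam ^ 2 = lam ^ 2 := by ring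
      rw [h00, hz, Real.log_pow]
      push_cast
      ring
    have hF1 : F 1 = lam ^ 2 * ((1 + lam ^ 2) / 2 * Real.log (1 + lam ^ 2) - 1 / 2) := by
      have h11 : F 1 = lam ^ 2 * ((1 + lam ^ 2) / 2 * Real.log ((1:ℝ) ^ 2 + lam ^ 2)
          - (1:ℝ) ^ 2 / 2) := by rw [hFdef]
      rw [h11]; norm_num
    have hlog1p : 0 ≤ Real.log (1 + lam ^ 2) := Real.log_nonneg (by nlinarith)
    have hFbound : lam ^ 2 * (-Real.log lam - 1 / 2) ≤ F 1 - F 0 := by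
      rw [hF1, hF0]
      nlinarith [mul_nonneg (sq_nonneg lam)
          (mul_nonneg (sq_nonneg lam) (neg_nonneg.mpr hloglam)),
        mul_nonneg (sq_nonneg lam) hlog1p,
        mul_nonneg (mul_nonneg (sq_nonneg lam) (sq_nonneg lam)) hlog1p]
    have hE1 : lam ^ 2 * (-Real.log lam - 1 / 2) - s ^ 2 / 2 ≤ ∫ x in s..1, (-φ x) := by
      have := hsplitφ
      rw [hE1a] at this
      linarith
    -- bound for ∫ (φ²/(4x) + x φd²/4)
    set Mf : ℝ → ℝ := fun r => 17 * lam ^ 4 * r / (r ^ 2 + lam ^ 2) ^ 2 with hMfdef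
    have hMcont : Continuous Mf := by
      rw [hMfdef]
      exact (continuous_const.mul continuous_id).div
        (((continuous_pow 2).add continuous_const).pow 2) (fun r => pow_ne_zero 2 (hqne r))
    have hptwM : ∀ x ∈ Icc s 1, φ x ^ 2 / (4 * x) + x * φd x ^ 2 / 4 ≤ Mf x := by
      intro x hx
      have hx0 := hIccpos x hx
      have hx1 : x ≤ 1 := hx.2
      have hq0 := hq x
      have hx2q : x ^ 2 ≤ x ^ 2 + lam ^ 2 := by nlinarith
      have ea : φ x ^ 2 / (4 * x)
          = lam ^ 4 * ((1 - x ^ 2) ^ 2 * x) / (4 * (x ^ 2 + lam ^ 2) ^ 2) := by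
        rw [hφdef]; field_simp
      have ea2 : lam ^ 4 * ((1 - x ^ 2) ^ 2 * x) / (4 * (x ^ 2 + lam ^ 2) ^ 2)
          ≤ lam ^ 4 * x / (4 * (x ^ 2 + lam ^ 2) ^ 2) := by
        apply div_le_div_of_nonneg_right ?_ (by positivity)
        have h2x : (0:ℝ) ≤ 2 - x ^ 2 := by nlinarith
        nlinarith [mul_nonneg (mul_nonneg (pow_nonneg hl0.le 4) hx0.le)
          (mul_nonneg (sq_nonneg x) h2x)]
      have eb : x * φd x ^ 2 / 4
          = lam ^ 4 * (x * ((1 - 3 * x ^ 2) * (x ^ 2 + lam ^ 2)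
            - (1 - x ^ 2) * x * (2 * x)) ^ 2) / (4 * (x ^ 2 + lam ^ 2) ^ 4) := by
        rw [hφddef]; field_simp
      set N := (1 - 3 * x ^ 2) * (x ^ 2 + lam ^ 2) - (1 - x ^ 2) * x * (2 * x) with hNdef
      have hN1 : N ≤ 8 * (x ^ 2 + lam ^ 2) := by rw [hNdef]; nlinarith
      have hx21 : x ^ 2 ≤ 1 := by nlinarith
      have hN2 : -(8 * (x ^ 2 + lam ^ 2)) ≤ N := by
        rw [hNdef]
        nlinarith [mul_nonneg (by positivity : (0:ℝ) ≤ 3 * (x ^ 2 + lam ^ 2))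
          (sub_nonneg.mpr hx21), sq_nonneg x, sq_nonneg lam, pow_nonneg hx0.le 4]
      have hN : N ^ 2 ≤ 64 * (x ^ 2 + lam ^ 2) ^ 2 := by nlinarith [hN1, hN2]
      have eb2 : lam ^ 4 * (x * N ^ 2) / (4 * (x ^ 2 + lam ^ 2) ^ 4)
          ≤ 16 * lam ^ 4 * x / (x ^ 2 + lam ^ 2) ^ 2 := by
        rw [div_le_div_iff₀ (by positivity) (by positivity)]
        calc lam ^ 4 * (x * N ^ 2) * (x ^ 2 + lam ^ 2) ^ 2
            = lam ^ 4 * x * (x ^ 2 + lam ^ 2) ^ 2 * N ^ 2 := by ring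
          _ ≤ lam ^ 4 * x * (x ^ 2 + lam ^ 2) ^ 2 * (64 * (x ^ 2 + lam ^ 2) ^ 2) := by
              apply mul_le_mul_of_nonneg_left hN (by positivity)
          _ = 16 * lam ^ 4 * x * (4 * (x ^ 2 + lam ^ 2) ^ 4) := by ring
      have efin : lam ^ 4 * x / (4 * (x ^ 2 + lam ^ 2) ^ 2)
          + 16 * lam ^ 4 * x / (x ^ 2 + lam ^ 2) ^ 2 ≤ Mf x := by
        have e3 : Mf x - (lam ^ 4 * x / (4 * (x ^ 2 + lam ^ 2) ^ 2)
            + 16 * lam ^ 4 * x / (x ^ 2 + lam ^ 2) ^ 2)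
            = (3 / 4) * (lam ^ 4 * x) / ((x ^ 2 + lam ^ 2) ^ 2) := by
          rw [hMfdef]; field_simp; ring
        have e4 : 0 ≤ (3 / 4) * (lam ^ 4 * x) / ((x ^ 2 + lam ^ 2) ^ 2) := by positivity
        linarith
      rw [ea, eb]
      rw [← hNdef] at *
      linarith [ea2, eb2, efin]
    have hIQ : (∫ x in s..1, (φ x ^ 2 / (4 * x) + x * φd x ^ 2 / 4)) ≤ 17 / 2 * lam ^ 2 := by
      have h1 : (∫ x in s..1, (φ x ^ 2 / (4 * x) + x * φd x ^ 2 / 4)) ≤ ∫ x in s..1, Mf x :=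
        intervalIntegral.integral_mono_on hs1.le (hiiOf _ cIQ)
          (hiiOf _ hMcont.continuousOn) hptwM
      have hsplitM : (∫ x in (0:ℝ)..s, Mf x) + ∫ x in s..1, Mf x = ∫ x in (0:ℝ)..1, Mf x :=
        integral_add_adjacent_intervals (hMcont.intervalIntegrable 0 s)
          (hMcont.intervalIntegrable s 1)
      have h0s : 0 ≤ ∫ x in (0:ℝ)..s, Mf x := by
        apply intervalIntegral.integral_nonneg hs0.le
        intro x hx
        rw [hMfdef]
        exact div_nonneg (mul_nonneg (by positivity) hx.1) (by positivity)
      have hHMd : ∀ r : ℝ, HasDerivAt (fun r : ℝ => -(17 * lam ^ 4 / 2) / (r ^ 2 + lam ^ 2))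
          (Mf r) r := by
        intro r
        have := (hasDerivAt_const r (-(17 * lam ^ 4 / 2))).div (hsq2 r) (hqne r)
        refine this.congr_deriv ?_
        rw [hMfdef]
        field_simp
        ring
      have hHM : (∫ x in (0:ℝ)..1, Mf x)
          = -(17 * lam ^ 4 / 2) / ((1:ℝ) ^ 2 + lam ^ 2) - -(17 * lam ^ 4 / 2) / ((0:ℝ) ^ 2 + lam ^ 2) :=
        integral_eq_sub_of_hasDerivAt (fun x _ => hHMd x) (hMcont.intervalIntegrable 0 1)
      have hfin2 : -(17 * lam ^ 4 / 2) / ((1:ℝ) ^ 2 + lam ^ 2)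
          - -(17 * lam ^ 4 / 2) / ((0:ℝ) ^ 2 + lam ^ 2) ≤ 17 / 2 * lam ^ 2 := by
        have hz : (0:ℝ) ^ 2 + lam ^ 2 = lam ^ 2 := by ring
        have e0 : -(17 * lam ^ 4 / 2) / ((0:ℝ) ^ 2 + lam ^ 2) = -(17 / 2 * lam ^ 2) := by
          rw [hz]; field_simp
        have e1 : -(17 * lam ^ 4 / 2) / ((1:ℝ) ^ 2 + lam ^ 2)
            = -((17 * lam ^ 4 / 2) / ((1:ℝ) ^ 2 + lam ^ 2)) := by ring
        have e2 : 0 ≤ (17 * lam ^ 4 / 2) / ((1:ℝ) ^ 2 + lam ^ 2) := by positivity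
        rw [e0, e1]
        linarith
      linarith [h1, hsplitM, h0s, hHM ▸ hfin2]
    -- boundary term
    have hbdry : -s ≤ -(φ s * u s) := by
      have h1 : |φ s * u s| ≤ s := by
        rw [abs_mul]
        calc |φ s| * |u s| ≤ s * 1 :=
              mul_le_mul (hφle s ⟨hs0.le, hs1.le⟩) hus (abs_nonneg _) hs0.le
          _ = s := mul_one s
      have h2 := le_abs_self (φ s * u s)
      linarith
    -- assemble the chain
    have step1 : (∫ r in Ioo s 1, r * rhoL lam u w u' w' r)
        ≤ ∫ r in Ioo (0:ℝ) 1, r * rhoL lam u w u' w' r :=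
      setIntegral_mono_set hint hnnae (HasSubset.Subset.eventuallyLE hsub01)
    have step2 : (∫ r in Ioo s 1, g r) ≤ ∫ r in Ioo s 1, r * rhoL lam u w u' w' r :=
      setIntegral_mono_on hgIoo (hint.mono_set hsub01) measurableSet_Ioo hmaster
    have step3 : (∫ r in Ioo s 1, g r) = ∫ x in s..1, g x := by
      rw [intervalIntegral.integral_of_le hs1.le, integral_Ioc_eq_integral_Ioo]
    have step4 : (∫ x in s..1, g x)
        = (∫ x in s..1, φ x * u' x) + ∫ x in s..1, h2 x := by
      rw [hgdef]
      exact intervalIntegral.integral_add hφu'ii hh2ii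
    have step5 : (∫ x in s..1, h2 x)
        = (∫ x in s..1, (-φ x)) + ∫ x in s..1, (u x ^ 2 / x - φ x ^ 2 / (4 * x)) := by
      rw [← intervalIntegral.integral_add (hiiOf (fun x => -φ x) hφc.neg.continuousOn) (hiiOf _ cIA)]
      apply intervalIntegral.integral_congr
      intro x hx
      rw [hh2def]
      ring
    have hcomb : (∫ x in s..1, (u x ^ 2 / x - φ x ^ 2 / (4 * x)))
        - (∫ x in s..1, (u x ^ 2 / x + x * φd x ^ 2 / 4))
        = -(∫ x in s..1, (φ x ^ 2 / (4 * x) + x * φd x ^ 2 / 4)) := by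
      rw [← intervalIntegral.integral_sub (hiiOf _ cIA) (hiiOf _ cAM), ← intervalIntegral.integral_neg]
      apply intervalIntegral.integral_congr
      intro x hx
      ring
    have hs2 : s ^ 2 ≤ s := by nlinarith
    rw [hφ1] at hibp
    have step23 := step2
    rw [step3] at step23
    linarith [step1, step23, step4, step5, hibp, hAM, hcomb, hIQ, hE1, hbdry]
  -- conclude
  have hfin : lam ^ 2 * (-Real.log lam - 9) ≤ ∫ r in Ioo (0:ℝ) 1, r * rhoL lam u w u' w' r := by
    apply le_of_forall_pos_le_add
    intro ε hε
    set δ := min (ε / 4) (1 / 2) with hδdef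
    have hδ0 : 0 < δ := lt_min (by linarith) (by norm_num)
    have hδ1 : δ ≤ 1 := le_trans (min_le_right _ _) (by norm_num)
    obtain ⟨s, hs0, hsδ, hus⟩ := hpig δ hδ0 hδ1
    have hs1 : s < 1 := lt_of_lt_of_le (lt_of_lt_of_le hsδ hδ1) le_rfl
    have := key s hs0 hs1 hus
    have hsε : 2 * s ≤ ε := by
      have : s < ε / 4 := lt_of_lt_of_le hsδ (min_le_left _ _)
      linarith
    linarith
  have : lam ^ 2 * (-Real.log lam - 10) ≤ lam ^ 2 * (-Real.log lam - 9) := by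
    apply mul_le_mul_of_nonneg_left _ (sq_nonneg lam)
    linarith
  linarith

/-- there are `C > 0` and `R₀ ≥ 1` such that for every `λ ∈ (0, 1/R₀)`,
`|log λ| − C ≤ λ⁻² inf_{𝒲_λ} I_λ ≤ |log λ| + C`, where
`I_λ(û, ŵ) = ∫₀¹ r ρ^el_λ(r) dr`. -/
theorem stmt11 : ∃ C : ℝ, 0 < C ∧ ∃ R₀ : ℝ, 1 ≤ R₀ ∧
    ∀ lam : ℝ, 0 < lam → lam < 1 / R₀ →
      |Real.log lam| - C ≤
        (sInf {x : ℝ | ∃ uh wh uh' wh' : ℝ → ℝ, MemWL lam uh wh uh' wh' ∧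
          x = ∫ r in Ioo 0 1, r * rhoL lam uh wh uh' wh' r}) / lam ^ 2 ∧
      (sInf {x : ℝ | ∃ uh wh uh' wh' : ℝ → ℝ, MemWL lam uh wh uh' wh' ∧
          x = ∫ r in Ioo 0 1, r * rhoL lam uh wh uh' wh' r}) / lam ^ 2 ≤
        |Real.log lam| + C := by
  refine ⟨10, by norm_num, 1, le_rfl, ?_⟩
  intro lam hl0 hlt
  have hl1 : lam < 1 := by
    rw [div_one] at hlt
    exact hlt
  set S : Set ℝ := {x : ℝ | ∃ uh wh uh' wh' : ℝ → ℝ, MemWL lam uh wh uh' wh' ∧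
      x = ∫ r in Ioo 0 1, r * rhoL lam uh wh uh' wh' r} with hSdef
  obtain ⟨uh, wh, uh', wh', hmem, hle⟩ := upper_aux lam hl0 hl1
  have hwit : (∫ r in Ioo (0:ℝ) 1, r * rhoL lam uh wh uh' wh' r) ∈ S :=
    ⟨uh, wh, uh', wh', hmem, rfl⟩
  have hSne : S.Nonempty := ⟨_, hwit⟩
  have hlow : ∀ x ∈ S, lam ^ 2 * (-Real.log lam - 10) ≤ x := by
    rintro x ⟨u, w, u', w', hm, rfl⟩
    exact lower_aux lam hl0 hl1 u w u' w' hm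
  have hbdd : BddBelow S := by
    refine ⟨lam ^ 2 * (-Real.log lam - 10), ?_⟩
    intro x hx
    exact hlow x hx
  have hS_lb : lam ^ 2 * (-Real.log lam - 10) ≤ sInf S := le_csInf hSne hlow
  have hS_ub : sInf S ≤ lam ^ 2 * (-Real.log lam + 10) :=
    le_trans (csInf_le hbdd hwit) hle
  have habs : |Real.log lam| = -Real.log lam :=
    abs_of_nonpos (Real.log_nonpos hl0.le hl1.le)
  have hl2 : (0:ℝ) < lam ^ 2 := by positivity
  constructor
  · rw [habs, le_div_iff₀ hl2]
    nlinarith [hS_lb]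
  · rw [habs, div_le_iff₀ hl2]
    nlinarith [hS_ub]
end

section
/- Let (û, ŵ) ∈ W^{1,2}_loc((0, 1], ℝ²) satisfy X₁ := ∫₀¹ r [(ŵ² − 1 + û')² + û²/r² + ŵ'² + ŵ²/r²] dr < ∞. Then |û(1)|² ≤ 4 (1 + X₁^{3/2}). -/
open MeasureTheory Set Filter

private lemma dom_integrable {G f : ℝ → ℝ} {s : Set ℝ} (hs : MeasurableSet s)
    (hsub : s ⊆ Ioc (0:ℝ) 1) (hG : IntegrableOn G (Ioc 0 1))
    (hf : AEStronglyMeasurable f (volume.restrict (Ioc 0 1)))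
    (hbd : ∀ t ∈ Ioc (0:ℝ) 1, |f t| ≤ G t) : IntegrableOn f s := by
  refine (hG.mono_set hsub).mono' (hf.mono_set hsub) ?_
  refine (ae_restrict_iff' hs).2 (ae_of_all _ fun t ht => ?_)
  rw [Real.norm_eq_abs]; exact hbd t (hsub ht)

private lemma dom_integral_le {G f : ℝ → ℝ} {s : Set ℝ} (hs : MeasurableSet s)
    (hsub : s ⊆ Ioc (0:ℝ) 1) (hG : IntegrableOn G (Ioc 0 1))
    (hGpos : ∀ t ∈ Ioc (0:ℝ) 1, 0 ≤ G t)
    (hf : AEStronglyMeasurable f (volume.restrict (Ioc 0 1)))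
    (hbd : ∀ t ∈ Ioc (0:ℝ) 1, |f t| ≤ G t) :
    ∫ t in s, f t ≤ ∫ t in Ioc (0:ℝ) 1, G t := by
  have hfi := dom_integrable hs hsub hG hf hbd
  have h1 : ∫ t in s, f t ≤ ∫ t in s, G t :=
    setIntegral_mono_on hfi (hG.mono_set hsub) hs fun t ht =>
      le_trans (le_abs_self _) (hbd t (hsub ht))
  refine h1.trans (setIntegral_mono_set hG ?_ (HasSubset.Subset.eventuallyLE hsub))
  exact (ae_restrict_iff' measurableSet_Ioc).2 (ae_of_all _ hGpos)

private lemma exists_point_le (f : ℝ → ℝ) (hf : IntegrableOn f (Ioo (0:ℝ) 1)) :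
    ∃ r ∈ Ioo (0:ℝ) 1, f r ≤ ∫ t in Ioo (0:ℝ) 1, f t := by
  by_contra h
  push_neg at h
  set c := ∫ t in Ioo (0:ℝ) 1, f t with hc
  have hvol : volume (Ioo (0:ℝ) 1) = 1 := by simp
  have hci : IntegrableOn (fun _ => c) (Ioo (0:ℝ) 1) :=
    integrableOn_const (by simp [hvol])
  have hzero : ∫ t in Ioo (0:ℝ) 1, (f t - c) = 0 := by
    rw [integral_sub hf hci, setIntegral_const, measureReal_def, hvol]
    simp [hc]
  have hnn : 0 ≤ᶠ[ae (volume.restrict (Ioo (0:ℝ) 1))] fun t => f t - c :=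
    (ae_restrict_iff' measurableSet_Ioo).2 (ae_of_all _ fun t ht => by
      have := h t ht; simp only [Pi.zero_apply]; linarith)
  have heq := (integral_eq_zero_iff_of_nonneg_ae hnn (hf.sub hci)).1 hzero
  have hne : volume.restrict (Ioo (0:ℝ) 1) ≠ 0 := by
    refine fun hcontra => ?_
    have := congrArg (fun μ => μ (Ioo (0:ℝ) 1)) hcontra
    simp [Measure.restrict_apply, hvol] at this
  haveI : (ae (volume.restrict (Ioo (0:ℝ) 1))).NeBot := ae_neBot.2 hne
  obtain ⟨t, ht1, ht2⟩ := (heq.and (ae_restrict_mem measurableSet_Ioo)).exists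
  have := h t ht2
  simp only [Pi.zero_apply] at ht1
  linarith

set_option maxHeartbeats 1000000 in
/-- if `(û, ŵ) ∈ W^{1,2}_loc((0, 1], ℝ²)` (continuous representatives with
pointwise derivatives) satisfies
`X₁ := ∫₀¹ r [(ŵ² − 1 + û')² + û²/r² + ŵ'² + ŵ²/r²] dr < ∞`, then
`|û(1)|² ≤ 4 (1 + X₁^{3/2})`. -/
theorem stmt18 (uh wh uh' wh' : ℝ → ℝ)
    (hu : ∀ r ∈ Ioc (0 : ℝ) 1, HasDerivAt uh (uh' r) r)
    (hw : ∀ r ∈ Ioc (0 : ℝ) 1, HasDerivAt wh (wh' r) r)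
    (hX : IntegrableOn
      (fun r => r * ((wh r ^ 2 - 1 + uh' r) ^ 2 + (uh r / r) ^ 2 + wh' r ^ 2 + wh r ^ 2 / r ^ 2))
      (Ioo 0 1)) :
    (uh 1) ^ 2 ≤ 4 * (1 +
      (∫ r in Ioo 0 1,
        r * ((wh r ^ 2 - 1 + uh' r) ^ 2 + (uh r / r) ^ 2 + wh' r ^ 2 + wh r ^ 2 / r ^ 2)) ^
      ((3 : ℝ) / 2)) := by
  set G : ℝ → ℝ := fun r =>
    r * ((wh r ^ 2 - 1 + uh' r) ^ 2 + (uh r / r) ^ 2 + wh' r ^ 2 + wh r ^ 2 / r ^ 2) with hGdef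
  set X : ℝ := ∫ r in Ioo (0:ℝ) 1, G r with hXdef
  -- basic facts about G
  have hGnn : ∀ t ∈ Ioc (0:ℝ) 1, 0 ≤ G t := fun t ht => by
    have h1 : (0:ℝ) < t := ht.1
    have : (0:ℝ) ≤ (wh t ^ 2 - 1 + uh' t) ^ 2 + (uh t / t) ^ 2 + wh' t ^ 2 + wh t ^ 2 / t ^ 2 := by
      positivity
    exact mul_nonneg h1.le this
  have hGIoc : IntegrableOn G (Ioc (0:ℝ) 1) := hX.congr_set_ae Ioo_ae_eq_Ioc.symm
  have hXnn : (0:ℝ) ≤ X :=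
    setIntegral_nonneg measurableSet_Ioo fun t ht => hGnn t (Ioo_subset_Ioc_self ht)
  have hXeq : ∫ t in Ioc (0:ℝ) 1, G t = X := setIntegral_congr_set Ioo_ae_eq_Ioc.symm
  -- measurability
  have hcu : ContinuousOn uh (Ioc (0:ℝ) 1) := fun r hr => (hu r hr).continuousAt.continuousWithinAt
  have hcw : ContinuousOn wh (Ioc (0:ℝ) 1) := fun r hr => (hw r hr).continuousAt.continuousWithinAt
  have hmu : AEStronglyMeasurable uh (volume.restrict (Ioc (0:ℝ) 1)) :=
    hcu.aestronglyMeasurable measurableSet_Ioc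
  have hmw : AEStronglyMeasurable wh (volume.restrict (Ioc (0:ℝ) 1)) :=
    hcw.aestronglyMeasurable measurableSet_Ioc
  have hmu' : AEStronglyMeasurable uh' (volume.restrict (Ioc (0:ℝ) 1)) :=
    (measurable_deriv uh).aestronglyMeasurable.congr
      ((ae_restrict_iff' measurableSet_Ioc).2 (ae_of_all _ fun r hr => (hu r hr).deriv))
  have hmw' : AEStronglyMeasurable wh' (volume.restrict (Ioc (0:ℝ) 1)) :=
    (measurable_deriv wh).aestronglyMeasurable.congr
      ((ae_restrict_iff' measurableSet_Ioc).2 (ae_of_all _ fun r hr => (hw r hr).deriv))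
  -- pointwise bounds
  have hGt : ∀ t ∈ Ioc (0:ℝ) 1, G t * t =
      t^2 * (wh t ^ 2 - 1 + uh' t)^2 + uh t ^2 + t^2 * wh' t ^2 + wh t ^2 := by
    intro t ht
    have h1 : t ≠ 0 := ne_of_gt ht.1
    simp only [hGdef]
    field_simp
  have hb1 : ∀ t ∈ Ioc (0:ℝ) 1, uh t ^ 2 ≤ G t := by
    intro t ht
    have h1 : (0:ℝ) < t := ht.1
    have h2 : t ≤ 1 := ht.2
    refine le_of_mul_le_mul_right ?_ h1
    rw [hGt t ht]
    nlinarith [sq_nonneg (uh t), sq_nonneg (t * (wh t ^ 2 - 1 + uh' t)), sq_nonneg (t * wh' t),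
      sq_nonneg (wh t)]
  have hb2 : ∀ t ∈ Ioc (0:ℝ) 1, wh t ^ 2 ≤ G t := by
    intro t ht
    have h1 : (0:ℝ) < t := ht.1
    have h2 : t ≤ 1 := ht.2
    refine le_of_mul_le_mul_right ?_ h1
    rw [hGt t ht]
    nlinarith [sq_nonneg (uh t), sq_nonneg (t * (wh t ^ 2 - 1 + uh' t)), sq_nonneg (t * wh' t),
      sq_nonneg (wh t)]
  have hb3 : ∀ t ∈ Ioc (0:ℝ) 1, |2 * wh t * wh' t| ≤ G t := by
    intro t ht
    have h1 : (0:ℝ) < t := ht.1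
    rw [abs_le]
    constructor
    · rw [neg_le]
      refine le_of_mul_le_mul_right ?_ h1
      rw [hGt t ht]
      nlinarith [sq_nonneg (wh t + t * wh' t), sq_nonneg (t * (wh t ^ 2 - 1 + uh' t)),
        sq_nonneg (uh t)]
    · refine le_of_mul_le_mul_right ?_ h1
      rw [hGt t ht]
      nlinarith [sq_nonneg (wh t - t * wh' t), sq_nonneg (t * (wh t ^ 2 - 1 + uh' t)),
        sq_nonneg (uh t)]
  have hb4 : ∀ t ∈ Ioc (0:ℝ) 1, |2 * uh t * (wh t ^ 2 - 1 + uh' t)| ≤ G t := by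
    intro t ht
    have h1 : (0:ℝ) < t := ht.1
    rw [abs_le]
    constructor
    · rw [neg_le]
      refine le_of_mul_le_mul_right ?_ h1
      rw [hGt t ht]
      nlinarith [sq_nonneg (uh t + t * (wh t ^ 2 - 1 + uh' t)), sq_nonneg (t * wh' t),
        sq_nonneg (wh t)]
    · refine le_of_mul_le_mul_right ?_ h1
      rw [hGt t ht]
      nlinarith [sq_nonneg (uh t - t * (wh t ^ 2 - 1 + uh' t)), sq_nonneg (t * wh' t),
        sq_nonneg (wh t)]
  -- mean value points
  have hmusq : AEStronglyMeasurable (fun t => uh t ^ 2) (volume.restrict (Ioc (0:ℝ) 1)) := by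
    exact (hmu.mul hmu).congr (ae_of_all _ fun t => by simp [sq])
  have hmwsq : AEStronglyMeasurable (fun t => wh t ^ 2) (volume.restrict (Ioc (0:ℝ) 1)) := by
    exact (hmw.mul hmw).congr (ae_of_all _ fun t => by simp [sq])
  have habs1 : ∀ t ∈ Ioc (0:ℝ) 1, |uh t ^ 2| ≤ G t := fun t ht => by
    rw [abs_of_nonneg (sq_nonneg _)]; exact hb1 t ht
  have habs2 : ∀ t ∈ Ioc (0:ℝ) 1, |wh t ^ 2| ≤ G t := fun t ht => by
    rw [abs_of_nonneg (sq_nonneg _)]; exact hb2 t ht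
  obtain ⟨r₀, hr₀mem, hr₀⟩ := exists_point_le (fun t => uh t ^ 2)
    (dom_integrable measurableSet_Ioo Ioo_subset_Ioc_self hGIoc hmusq habs1)
  obtain ⟨s₀, hs₀mem, hs₀⟩ := exists_point_le (fun t => wh t ^ 2)
    (dom_integrable measurableSet_Ioo Ioo_subset_Ioc_self hGIoc hmwsq habs2)
  have hr₀X : uh r₀ ^ 2 ≤ X :=
    hr₀.trans ((dom_integral_le measurableSet_Ioo Ioo_subset_Ioc_self hGIoc hGnn hmusq
      habs1).trans_eq hXeq)
  have hs₀X : wh s₀ ^ 2 ≤ X :=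
    hs₀.trans ((dom_integral_le measurableSet_Ioo Ioo_subset_Ioc_self hGIoc hGnn hmwsq
      habs2).trans_eq hXeq)
  have hmww' : AEStronglyMeasurable (fun t => 2 * wh t * wh' t)
      (volume.restrict (Ioc (0:ℝ) 1)) := (hmw.const_mul 2).mul hmw'
  -- sup bound on wh^2
  have hC : ∀ t ∈ Ioc (0:ℝ) 1, wh t ^ 2 ≤ 2 * X := by
    intro t ht
    have hsub : uIcc s₀ t ⊆ Ioc (0:ℝ) 1 := fun x hx => by
      rw [Set.uIcc_eq_union] at hx
      rcases hx with hx | hx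
      · exact ⟨lt_of_lt_of_le hs₀mem.1 hx.1, hx.2.trans ht.2⟩
      · exact ⟨lt_of_lt_of_le ht.1 hx.1, hx.2.trans hs₀mem.2.le⟩
    have hsub' : Set.uIoc s₀ t ⊆ Ioc (0:ℝ) 1 := Set.uIoc_subset_uIcc.trans hsub
    have hderiv : ∀ x ∈ uIcc s₀ t, HasDerivAt (fun y => wh y ^ 2) (2 * wh x * wh' x) x :=
      fun x hx => by simpa [mul_assoc] using (hw x (hsub hx)).fun_pow 2
    have hint : IntervalIntegrable (fun x => 2 * wh x * wh' x) volume s₀ t := by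
      rw [intervalIntegrable_iff]
      exact dom_integrable measurableSet_uIoc hsub' hGIoc hmww' hb3
    have hFTC := intervalIntegral.integral_eq_sub_of_hasDerivAt hderiv hint
    have habsint : |∫ x in s₀..t, 2 * wh x * wh' x| ≤ X := by
      refine le_trans ?_ ((dom_integral_le measurableSet_uIoc hsub' hGIoc hGnn
        (hmww'.norm) (fun x hx => by rw [abs_of_nonneg (norm_nonneg _), Real.norm_eq_abs]
                                     exact hb3 x hx)).trans_eq hXeq)
      simpa [Real.norm_eq_abs] using
        intervalIntegral.norm_integral_le_integral_norm_uIoc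
          (f := fun x => 2 * wh x * wh' x) (a := s₀) (b := t) (μ := volume)
    have : wh t ^ 2 - wh s₀ ^ 2 ≤ X := by
      rw [← hFTC]; exact (le_abs_self _).trans habsint
    linarith
  -- the constant
  set c : ℝ := Real.sqrt (2 * X) with hcdef
  have hc0 : (0:ℝ) ≤ c := Real.sqrt_nonneg _
  -- pointwise bound on the main integrand
  have hmain : ∀ t ∈ Ioc (0:ℝ) 1, |2 * uh t * uh' t| ≤ (2 + 2*c) * G t + 1 := by
    intro t ht
    have hwc : |wh t| ≤ c := Real.abs_le_sqrt (hC t ht)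
    have h2 : |2 * uh t * wh t ^ 2| ≤ c * (uh t ^ 2 + wh t ^ 2) := by
      have esq : |wh t ^ 2| = |wh t| * |wh t| := by rw [sq, abs_mul]
      have e1 : |2 * uh t * wh t ^ 2| = 2 * |uh t| * |wh t| * |wh t| := by
        rw [abs_mul, abs_mul, abs_two, esq]
        ring
      rw [e1]
      nlinarith [sq_nonneg (|uh t| - |wh t|), abs_nonneg (uh t), abs_nonneg (wh t),
        sq_abs (uh t), sq_abs (wh t),
        mul_nonneg (abs_nonneg (wh t)) (sq_nonneg (|uh t| - |wh t|)),
        mul_nonneg (sub_nonneg.2 hwc) (add_nonneg (sq_nonneg (uh t)) (sq_nonneg (wh t)))]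
    have h3 : |2 * uh t| ≤ uh t ^ 2 + 1 := by
      rw [abs_mul, abs_two]
      nlinarith [sq_nonneg (|uh t| - 1), sq_abs (uh t), abs_nonneg (uh t)]
    have e2 : 2 * uh t * uh' t
        = 2 * uh t * (wh t ^ 2 - 1 + uh' t) - 2 * uh t * wh t ^ 2 + 2 * uh t := by ring
    have tri : |2 * uh t * uh' t| ≤ |2 * uh t * (wh t ^ 2 - 1 + uh' t)|
        + |2 * uh t * wh t ^ 2| + |2 * uh t| := by
      rw [e2]
      exact (abs_add_le _ _).trans (add_le_add_left (abs_sub _ _) _)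
    have hcg : c * (uh t ^ 2 + wh t ^ 2) ≤ c * (2 * G t) :=
      mul_le_mul_of_nonneg_left (by linarith [hb1 t ht, hb2 t ht]) hc0
    have := hb4 t ht
    have := hb1 t ht
    linarith
  -- FTC for uh^2 on [r₀, 1]
  have h1mem : (1:ℝ) ∈ Ioc (0:ℝ) 1 := ⟨one_pos, le_refl 1⟩
  have hsubI : Icc r₀ 1 ⊆ Ioc (0:ℝ) 1 := fun x hx => ⟨lt_of_lt_of_le hr₀mem.1 hx.1, hx.2⟩
  have huIcc : uIcc r₀ (1:ℝ) = Icc r₀ 1 := Set.uIcc_of_le hr₀mem.2.le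
  have hmuu' : AEStronglyMeasurable (fun t => 2 * uh t * uh' t)
      (volume.restrict (Ioc (0:ℝ) 1)) := (hmu.const_mul 2).mul hmu'
  have hG' : IntegrableOn (fun t => (2 + 2*c) * G t + 1) (Ioc (0:ℝ) 1) :=
    (hGIoc.const_mul _).add (integrableOn_const (by simp))
  have hG'nn : ∀ t ∈ Ioc (0:ℝ) 1, 0 ≤ (2 + 2*c) * G t + 1 := fun t ht => by
    have := hGnn t ht; positivity
  have hintu : IntervalIntegrable (fun t => 2 * uh t * uh' t) volume r₀ 1 := by
    rw [intervalIntegrable_iff]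
    refine dom_integrable measurableSet_uIoc ?_ hG' hmuu' hmain
    rw [Set.uIoc_of_le hr₀mem.2.le]
    exact Set.Ioc_subset_Ioc hr₀mem.1.le (le_refl 1)
  have hderivu : ∀ x ∈ uIcc r₀ (1:ℝ), HasDerivAt (fun y => uh y ^ 2) (2 * uh x * uh' x) x := by
    intro x hx
    rw [huIcc] at hx
    simpa [mul_assoc] using (hu x (hsubI hx)).fun_pow 2
  have hFTCu := intervalIntegral.integral_eq_sub_of_hasDerivAt hderivu hintu
  -- bound the integral
  have hIocsub : Ioc r₀ 1 ⊆ Ioc (0:ℝ) 1 := Set.Ioc_subset_Ioc hr₀mem.1.le (le_refl 1)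
  have hintbound : ∫ t in r₀..1, 2 * uh t * uh' t ≤ (2 + 2*c) * X + 1 := by
    rw [intervalIntegral.integral_of_le hr₀mem.2.le]
    have step1 : ∫ t in Ioc r₀ 1, 2 * uh t * uh' t ≤ ∫ t in Ioc r₀ 1, ((2 + 2*c) * G t + 1) :=
      setIntegral_mono_on
        (dom_integrable measurableSet_Ioc hIocsub hG' hmuu' hmain)
        (hG'.mono_set hIocsub) measurableSet_Ioc
        (fun t ht => (le_abs_self _).trans (hmain t (hIocsub ht)))
    have step2 : ∫ t in Ioc r₀ 1, ((2 + 2*c) * G t + 1)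
        = (2 + 2*c) * (∫ t in Ioc r₀ 1, G t) + (volume (Ioc r₀ 1)).toReal := by
      rw [integral_add ((hGIoc.mono_set hIocsub).const_mul _)
        (integrableOn_const (by simp))]
      rw [integral_const_mul, setIntegral_const, smul_eq_mul, mul_one, measureReal_def]

    have step3 : ∫ t in Ioc r₀ 1, G t ≤ X := by
      refine le_of_le_of_eq (setIntegral_mono_set hGIoc ?_
        (HasSubset.Subset.eventuallyLE hIocsub)) hXeq
      exact (ae_restrict_iff' measurableSet_Ioc).2 (ae_of_all _ hGnn)
    have step4 : (volume (Ioc r₀ 1)).toReal ≤ 1 := by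
      rw [Real.volume_Ioc, ENNReal.toReal_ofReal (by linarith [hr₀mem.2] : (0:ℝ) ≤ 1 - r₀)]
      linarith [hr₀mem.1]
    have hc2 : (0:ℝ) ≤ 2 + 2*c := by linarith
    calc ∫ t in Ioc r₀ 1, 2 * uh t * uh' t
        ≤ (2 + 2*c) * (∫ t in Ioc r₀ 1, G t) + (volume (Ioc r₀ 1)).toReal := by
          rw [← step2]; exact step1
      _ ≤ (2 + 2*c) * X + 1 :=
          add_le_add (mul_le_mul_of_nonneg_left step3 hc2) step4
  have hkey : uh 1 ^ 2 ≤ 3 * X + 2 * c * X + 1 := by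
    have : uh 1 ^ 2 - uh r₀ ^ 2 ≤ (2 + 2*c) * X + 1 := hFTCu ▸ hintbound
    linarith [hr₀X]
  -- final numeric inequality
  set y : ℝ := Real.sqrt X with hydef
  have hy0 : (0:ℝ) ≤ y := Real.sqrt_nonneg _
  have hyX : y ^ 2 = X := Real.sq_sqrt hXnn
  set s : ℝ := Real.sqrt 2 with hsdef
  have hs0 : (0:ℝ) ≤ s := Real.sqrt_nonneg _
  have hs2 : s ^ 2 = 2 := Real.sq_sqrt (by norm_num)
  have hs15 : s ≤ 3/2 := by nlinarith
  have hs3 : s ^ 3 = 2 * s := by rw [pow_succ, hs2]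
  have hcsy : c = s * y := by
    rw [hcdef, hsdef, hydef, ← Real.sqrt_mul (by norm_num : (0:ℝ) ≤ 2)]
  have h32 : X ^ ((3:ℝ)/2) = y ^ 3 := by
    rw [hydef, Real.sqrt_eq_rpow, ← Real.rpow_natCast (X ^ ((1:ℝ)/2)) 3,
      ← Real.rpow_mul hXnn]
    norm_num
  rw [h32]
  have : 3 * X + 2 * c * X + 1 ≤ 4 * (1 + y ^ 3) := by
    rw [hcsy, ← hyX]
    nlinarith [mul_nonneg (by linarith : (0:ℝ) ≤ 4 - 2*s)
        (mul_nonneg hy0 (sq_nonneg (2*y - (2+s)))),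
      sq_nonneg (2*y - (2+s)), hs2, hs3, hs15, hs0, hy0]
  linarith [hkey]
end

section
/- Every twice continuously differentiable function û : (0, ∞) → ℝ satisfying the linear ODE (r(û'(r) − 1))' = û(r)/r for all r ∈ (0, ∞) is of the form û(r) = (1/2) r log r + C₁ r + C₂ r^{−1} for some constants C₁, C₂ ∈ ℝ. In particular, if moreover û(r) → 0 as r → 0, then C₂ = 0 and û(r) = (1/2) r log r + C₁ r, which is negative for all sufficiently small r > 0. -/
open Set Filter

lemma const_aux (f : ℝ → ℝ) (hf : ∀ x ∈ Ioi (0:ℝ), HasDerivAt f 0 x) :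
    ∀ r ∈ Ioi (0:ℝ), f r = f 1 := by
  intro r hr
  have hdo : DifferentiableOn ℝ f (Ioi 0) := fun x hx =>
    (hf x hx).differentiableAt.differentiableWithinAt
  have hz : ∀ x ∈ Ioi (0:ℝ), fderivWithin ℝ f (Ioi 0) x = 0 := by
    intro x hx
    have := (hf x hx).hasFDerivAt.hasFDerivWithinAt.fderivWithin
      (isOpen_Ioi.uniqueDiffWithinAt hx)
    rw [this]
    ext
    simp
  exact (convex_Ioi (0:ℝ)).is_const_of_fderivWithin_eq_zero hdo hz hr (by norm_num)

/-- self-penetration pathology: every `C²` function `û : (0, ∞) → ℝ`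
solving `(r(û'(r) − 1))' = û(r)/r` on `(0, ∞)` has the form
`û(r) = (1/2) r log r + C₁ r + C₂ r⁻¹`; if moreover `û(r) → 0` as `r → 0⁺` then `C₂ = 0`,
i.e. `û(r) = (1/2) r log r + C₁ r`, which is negative for all sufficiently small `r > 0`. -/
theorem stmt19 (uh : ℝ → ℝ) (h2 : ContDiffOn ℝ 2 uh (Ioi 0))
    (hode : ∀ r ∈ Ioi (0 : ℝ),
      HasDerivAt (fun s => s * (deriv uh s - 1)) (uh r / r) r) :
    (∃ C₁ C₂ : ℝ, ∀ r ∈ Ioi (0 : ℝ),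
        uh r = (1 / 2) * r * Real.log r + C₁ * r + C₂ / r) ∧
    (Tendsto uh (nhdsWithin 0 (Ioi 0)) (nhds 0) →
      ∃ C₁ : ℝ, (∀ r ∈ Ioi (0 : ℝ), uh r = (1 / 2) * r * Real.log r + C₁ * r) ∧
        ∃ δ > (0 : ℝ), ∀ r ∈ Ioo 0 δ, uh r < 0) := by
  have hU : ∀ r ∈ Ioi (0:ℝ), HasDerivAt uh (deriv uh r) r := by
    intro r hr
    exact (((h2.differentiableOn (by norm_num)) r hr).differentiableAt
      (isOpen_Ioi.mem_nhds hr)).hasDerivAt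
  have hkey : ∃ K : ℝ, ∀ r ∈ Ioi (0:ℝ),
      uh r + r * deriv uh r = r * (K + 1 + Real.log r) := by
    set h : ℝ → ℝ := fun s => (s * (deriv uh s - 1)) / s + uh s / s - Real.log s with hh
    have hderiv : ∀ r ∈ Ioi (0:ℝ), HasDerivAt h 0 r := by
      intro r hr
      have hrne : r ≠ 0 := ne_of_gt hr
      have d1 : HasDerivAt (fun s => (s * (deriv uh s - 1)) / s)
          ((uh r / r * r - r * (deriv uh r - 1) * 1) / r ^ 2) r :=
        (hode r hr).div (hasDerivAt_id r) hrne
      have d2 : HasDerivAt (fun s => uh s / s)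
          ((deriv uh r * r - uh r * 1) / r ^ 2) r :=
        (hU r hr).div (hasDerivAt_id r) hrne
      have d3 : HasDerivAt Real.log r⁻¹ r := Real.hasDerivAt_log hrne
      have := (d1.add d2).sub d3
      refine this.congr_deriv (Eq.symm ?_)
      field_simp
      ring
    refine ⟨deriv uh 1 - 1 + uh 1, fun r hr => ?_⟩
    have hrne : r ≠ 0 := ne_of_gt hr
    have hcon := const_aux h hderiv r hr
    rw [hh] at hcon
    simp only at hcon
    field_simp at hcon
    linear_combination hcon - r * Real.log_one
  obtain ⟨K, hkey⟩ := hkey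
  have hform : ∃ c C₂ : ℝ, ∀ r ∈ Ioi (0:ℝ),
      uh r = (1/2) * r * Real.log r + c * r + C₂ / r := by
    set c : ℝ := K / 2 + 1 / 4 with hc
    set F : ℝ → ℝ := fun s => s * uh s - (1/2) * s ^ 2 * Real.log s - c * s ^ 2 with hF
    have hFd : ∀ r ∈ Ioi (0:ℝ), HasDerivAt F 0 r := by
      intro r hr
      have hrne : r ≠ 0 := ne_of_gt hr
      have d1 : HasDerivAt (fun s => s * uh s) (1 * uh r + r * deriv uh r) r :=
        (hasDerivAt_id r).mul (hU r hr)
      have d2 : HasDerivAt (fun s : ℝ => (1/2) * (s ^ 2 * Real.log s))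
          ((1/2) * ((2 * r ^ 1) * Real.log r + r ^ 2 * r⁻¹)) r :=
        ((hasDerivAt_pow 2 r).mul (Real.hasDerivAt_log hrne)).const_mul (1/2)
      have d3 : HasDerivAt (fun s : ℝ => c * s ^ 2) (c * (2 * r ^ 1)) r :=
        (hasDerivAt_pow 2 r).const_mul c
      have hd := (d1.sub d2).sub d3
      have heq : (fun s => s * uh s - (1/2) * (s ^ 2 * Real.log s) - c * s ^ 2) = F := by
        funext s; rw [hF]; ring
      rw [← heq]
      refine hd.congr_deriv (Eq.symm ?_)
      have hk := hkey r hr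
      have hr2 : r ^ 2 * r⁻¹ = r := by
        rw [sq, mul_assoc, mul_inv_cancel₀ hrne, mul_one]
      rw [hr2, hc]
      linear_combination -hk
    refine ⟨c, uh 1 - c, fun r hr => ?_⟩
    have hrne : r ≠ 0 := ne_of_gt hr
    have hcon := const_aux F hFd r hr
    rw [hF] at hcon
    simp only at hcon
    field_simp at hcon ⊢
    linear_combination hcon - Real.log_one
  obtain ⟨c, C₂, hform⟩ := hform
  refine ⟨⟨c, C₂, hform⟩, ?_⟩
  intro htend
  have hlog1 : Tendsto (fun x : ℝ => Real.log x * x) (nhdsWithin 0 (Ioi 0)) (nhds 0) := by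
    have := tendsto_log_mul_rpow_nhdsGT_zero (r := 1) one_pos
    refine this.congr' ?_
    filter_upwards [self_mem_nhdsWithin] with x hx
    rw [Real.rpow_one]
  have hid : Tendsto (fun x : ℝ => x) (nhdsWithin 0 (Ioi 0)) (nhds 0) :=
    tendsto_id.mono_left nhdsWithin_le_nhds
  have hRHS : Tendsto (fun r : ℝ => (1/2) * (r * (Real.log r * r)) + c * (r * r) + C₂)
      (nhdsWithin 0 (Ioi 0)) (nhds C₂) := by
    have : Tendsto (fun r : ℝ => (1/2) * (r * (Real.log r * r)) + c * (r * r) + C₂)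
        (nhdsWithin 0 (Ioi 0))
        (nhds ((1/2) * ((0:ℝ) * 0) + c * ((0:ℝ) * 0) + C₂)) :=
      (((hid.mul hlog1).const_mul _).add ((hid.mul hid).const_mul _)).add tendsto_const_nhds
    simpa using this
  have hLHS : Tendsto (fun r : ℝ => r * uh r) (nhdsWithin 0 (Ioi 0)) (nhds 0) := by
    simpa using hid.mul htend
  have heq : (fun r : ℝ => r * uh r) =ᶠ[nhdsWithin 0 (Ioi 0)]
      (fun r : ℝ => (1/2) * (r * (Real.log r * r)) + c * (r * r) + C₂) := by
    filter_upwards [self_mem_nhdsWithin] with r hr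
    have hrne : r ≠ 0 := ne_of_gt hr
    rw [hform r hr]
    field_simp
  have hC2zero : C₂ = 0 := tendsto_nhds_unique (hRHS.congr' heq.symm) hLHS
  refine ⟨c, ?_, Real.exp (-2 * c), Real.exp_pos _, ?_⟩
  · intro r hr
    have := hform r hr
    rw [hC2zero] at this
    simpa using this
  · intro r hr
    obtain ⟨hr0, hrδ⟩ := hr
    have hform' := hform r hr0
    rw [hC2zero] at hform'
    have hlog : Real.log r < -2 * c := by
      have := Real.log_lt_log hr0 hrδ
      rwa [Real.log_exp] at this
    rw [hform']
    have hrw : (1/2) * r * Real.log r + c * r + 0 / r = r * ((1/2) * Real.log r + c) := by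
      ring
    rw [hrw]
    have h1 : (1/2) * Real.log r + c < 0 := by linarith
    exact mul_neg_of_pos_of_neg hr0 h1
end
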